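/- If F ∈ ℂ[x_1,…,x_n] is a homogeneous form of degree d ≥ 3 defining a smooth hypersurface in ℙ^{n−1} (i.e. F and its first partial derivatives have no common nonzero zero in ℂ^n), then dim_ℂ (F^⊥)_2 ≤ n(n−1)/2. -/

import Mathlib

/-!
Apolarity setup.  `S = ℂ[x_1,…,x_n]` and its dual ring `T = ℂ[α_1,…,α_n]` are both
realized as `MvPolynomial (Fin n) ℂ`; the apolarity action `Θ ⌟ F` (`contract Θ F`)
lets `α_i` act as the partial differentiation operator `∂/∂x_i`.
-/

open MvPolynomial

noncomputable section Apolarity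

/-- Partial derivatives on `ℂ[x_1,…,x_n]` commute. -/
lemma pderiv_pderiv_comm (n : ℕ) (i j : Fin n) (f : MvPolynomial (Fin n) ℂ) :
    pderiv i (pderiv j f) = pderiv j (pderiv i f) := by
  induction f using MvPolynomial.induction_on with
  | C a => simp
  | add p q hp hq => simp [hp, hq]
  | mul_X p k hp =>
    rcases eq_or_ne i k with rfl | hik
    · rcases eq_or_ne j i with rfl | hjk
      · rfl
      · simp only [pderiv_mul, pderiv_X_self, pderiv_X_of_ne hjk, pderiv_X_of_ne hjk.symm,
          map_add, map_zero, map_one, Derivation.map_one_eq_zero, mul_one, mul_zero,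
          add_zero, zero_add, hp]
    · rcases eq_or_ne j k with rfl | hjk
      · simp only [pderiv_mul, pderiv_X_self, pderiv_X_of_ne hik, pderiv_X_of_ne hik.symm,
          map_add, map_zero, map_one, Derivation.map_one_eq_zero, mul_one, mul_zero,
          add_zero, zero_add, hp]
      · simp only [pderiv_mul, pderiv_X_of_ne hik.symm, pderiv_X_of_ne hjk.symm, map_add,
          map_zero, mul_zero, add_zero, zero_add, hp]

variable (n : ℕ)

/-- The endomorphism `∂/∂x_i` of `S = ℂ[x_1,…,x_n]`. -/
def derOp (i : Fin n) : Module.End ℂ (MvPolynomial (Fin n) ℂ) :=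
  (pderiv i).toLinearMap

lemma derOp_commute (i j : Fin n) : Commute (derOp n i) (derOp n j) :=
  LinearMap.ext fun f => pderiv_pderiv_comm n i j f

/-- The commuting product of the operators `(∂/∂x_i)^(m i)`. -/
def piDiffHom : (Fin n → Multiplicative ℕ) →* Module.End ℂ (MvPolynomial (Fin n) ℂ) :=
  MonoidHom.noncommPiCoprod (fun i : Fin n => powersHom _ (derOp n i))
    (fun i j _ x y => ((derOp_commute n i j).pow_pow x y))

/-- The differential operator `∏ i, (∂/∂x_i)^(m i)` attached to an exponent vector `m`. -/
def diffMonoidHom : Multiplicative (Fin n →₀ ℕ) →* Module.End ℂ (MvPolynomial (Fin n) ℂ) :=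
  (piDiffHom n).comp
    (AddMonoidHom.toMultiplicative
      (Finsupp.coeFnAddHom : (Fin n →₀ ℕ) →+ (Fin n → ℕ)))

/-- The apolarity action of the dual ring `T = ℂ[α_1,…,α_n]` on `S = ℂ[x_1,…,x_n]`, as an
algebra homomorphism to differential operators: `α_i` acts as `∂/∂x_i`. -/
def apolarAlgHom :
    MvPolynomial (Fin n) ℂ →ₐ[ℂ] Module.End ℂ (MvPolynomial (Fin n) ℂ) :=
  AddMonoidAlgebra.lift ℂ _ (Fin n →₀ ℕ) (diffMonoidHom n)

variable {n}

/-- The apolarity action `Θ ⌟ F`: apply to `F` the differential operator obtained from `Θ`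
by substituting `∂/∂x_i` for the `i`-th (dual) variable. -/
def contract (Θ F : MvPolynomial (Fin n) ℂ) : MvPolynomial (Fin n) ℂ :=
  apolarAlgHom n Θ F

lemma apolarAlgHom_X (i : Fin n) : apolarAlgHom n (X i) = derOp n i := by
  classical
  have hX : (X i : MvPolynomial (Fin n) ℂ)
      = AddMonoidAlgebra.single (Finsupp.single i 1) (1 : ℂ) := rfl
  rw [hX]
  rw [show apolarAlgHom n (AddMonoidAlgebra.single (Finsupp.single i 1) (1:ℂ))
      = (1:ℂ) • diffMonoidHom n (Multiplicative.ofAdd (Finsupp.single i 1)) from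
    AddMonoidAlgebra.lift_single _ _ _]
  rw [one_smul]
  rw [diffMonoidHom]
  have harg : (AddMonoidHom.toMultiplicative
        (Finsupp.coeFnAddHom : (Fin n →₀ ℕ) →+ (Fin n → ℕ)))
        (Multiplicative.ofAdd (Finsupp.single i 1))
      = Pi.mulSingle (M := fun _ : Fin n => Multiplicative ℕ) i (Multiplicative.ofAdd 1) := by
    funext j
    rcases eq_or_ne j i with rfl | hj
    · show Multiplicative.ofAdd ((Finsupp.single j 1 : Fin n →₀ ℕ) j)
        = Pi.mulSingle (M := fun _ : Fin n => Multiplicative ℕ) j (Multiplicative.ofAdd 1) j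
      rw [Finsupp.single_eq_same, Pi.mulSingle_eq_same]
    · show Multiplicative.ofAdd ((Finsupp.single i 1 : Fin n →₀ ℕ) j)
        = Pi.mulSingle (M := fun _ : Fin n => Multiplicative ℕ) i (Multiplicative.ofAdd 1) j
      rw [Finsupp.single_apply, if_neg (Ne.symm hj), Pi.mulSingle_eq_of_ne hj]
      exact ofAdd_zero
  refine (congrArg (piDiffHom n) harg).trans ?_
  rw [piDiffHom]
  exact (MonoidHom.noncommPiCoprod_mulSingle _ _ _).trans rfl

/-- Sanity check: the dual variable `α_i` acts on `F` as `∂F/∂x_i`. -/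
@[simp] lemma contract_X (i : Fin n) (F : MvPolynomial (Fin n) ℂ) :
    contract (X i) F = pderiv i F := by
  rw [contract, apolarAlgHom_X]; rfl

/-- The apolar (annihilator) ideal `F^⊥ = {Θ ∈ T : Θ ⌟ F = 0}` of a polynomial `F`. -/
def apolarIdeal (F : MvPolynomial (Fin n) ℂ) : Ideal (MvPolynomial (Fin n) ℂ) where
  carrier := {Θ | contract Θ F = 0}
  zero_mem' := by simp [contract]
  add_mem' := by
    intro a b ha hb
    simp only [Set.mem_setOf_eq, contract, map_add, LinearMap.add_apply] at *
    rw [ha, hb, add_zero]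
  smul_mem' := by
    intro c x hx
    simp only [Set.mem_setOf_eq, smul_eq_mul, contract, map_mul, Module.End.mul_apply] at *
    rw [hx, map_zero]

@[simp] lemma mem_apolarIdeal {Θ F : MvPolynomial (Fin n) ℂ} :
    Θ ∈ apolarIdeal F ↔ contract Θ F = 0 := Iff.rfl

variable (n)

/-- The irrelevant maximal ideal `m = ⟨α_1,…,α_n⟩` of `T`. -/
def irrIdeal : Ideal (MvPolynomial (Fin n) ℂ) :=
  Ideal.span (Set.range X)

variable {n}

/-- The homogeneous ideal `I` has a minimal generator of degree `k`, i.e. `(I/mI)_k ≠ 0`: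
there is a homogeneous element of `I` of degree `k` not belonging to `m * I`. -/
def HasMinGenOfDegree (I : Ideal (MvPolynomial (Fin n) ℂ)) (k : ℕ) : Prop :=
  ∃ Θ, Θ ∈ I ∧ Θ.IsHomogeneous k ∧ Θ ∉ irrIdeal n * I

/-- The homogeneous ideal `I` has at least `r` minimal generators of degree `k`, i.e.
`dim_ℂ (I/mI)_k ≥ r`: there are `r` homogeneous degree-`k` elements of `I` that are
linearly independent modulo `m * I`. -/
def MinGensAtLeast (I : Ideal (MvPolynomial (Fin n) ℂ)) (k r : ℕ) : Prop :=
  ∃ Θ : Fin r → MvPolynomial (Fin n) ℂ,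
    (∀ i, Θ i ∈ I ∧ (Θ i).IsHomogeneous k) ∧
    ∀ c : Fin r → ℂ, (∑ i, c i • Θ i) ∈ irrIdeal n * I → ∀ i, c i = 0

/-- `F` is an `s`-fold direct sum of degree `d`: `F = F_1 + ⋯ + F_s` where the `F_i` are
nonzero degree-`d` forms in independent subspaces `V_i` of the space of linear forms with
`V = V_1 ⊕ ⋯ ⊕ V_s` (i.e. in disjoint sets of variables, up to linear change of variables;
`F_i ∈ S^d V_i` is expressed as membership in the subalgebra generated by `V_i`). -/
def IsSFoldDirectSum (F : MvPolynomial (Fin n) ℂ) (d s : ℕ) : Prop :=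
  ∃ (V : Fin s → Submodule ℂ (MvPolynomial (Fin n) ℂ))
    (G : Fin s → MvPolynomial (Fin n) ℂ),
    (∀ i, V i ≤ homogeneousSubmodule (Fin n) ℂ 1) ∧
    iSupIndep V ∧
    (⨆ i, V i) = homogeneousSubmodule (Fin n) ℂ 1 ∧
    (∀ i, G i ≠ 0 ∧ (G i).IsHomogeneous d ∧ G i ∈ Algebra.adjoin ℂ (V i : Set _)) ∧
    F = ∑ i, G i

/-- `F` is a direct sum: `F = F₁ + F₂` with `F₁ ∈ S^d V₁`, `F₂ ∈ S^d V₂` nonzero and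
`V = V₁ ⊕ V₂`. -/
def IsDirectSum (F : MvPolynomial (Fin n) ℂ) (d : ℕ) : Prop :=
  IsSFoldDirectSum F d 2

/-- `F` is a limit (as `t → 0`) of `s`-fold direct sums of degree `d`. -/
def IsLimitOfSFoldDirectSums (F : MvPolynomial (Fin n) ℂ) (d s : ℕ) : Prop :=
  ∃ G : ℂ → MvPolynomial (Fin n) ℂ,
    (∀ t : ℂ, t ≠ 0 → IsSFoldDirectSum (G t) d s) ∧
    ∀ m : Fin n →₀ ℕ,
      Filter.Tendsto (fun t => MvPolynomial.coeff m (G t))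
        (nhdsWithin (0 : ℂ) {(0 : ℂ)}ᶜ) (nhds (MvPolynomial.coeff m F))

/-- `F` is a limit of direct sums. -/
def IsLimitOfDirectSums (F : MvPolynomial (Fin n) ℂ) (d : ℕ) : Prop :=
  IsLimitOfSFoldDirectSums F d 2

/-- `F` is concise: `(F^⊥)_1 = 0`, i.e. `F` cannot be written using fewer variables. -/
def Concise (F : MvPolynomial (Fin n) ℂ) : Prop :=
  ∀ Θ : MvPolynomial (Fin n) ℂ, Θ.IsHomogeneous 1 → contract Θ F = 0 → Θ = 0

end Apolarity

noncomputable section AuxProof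

namespace ApolarAux

variable {n : ℕ}

lemma degree_eq_sum_univ (μ : Fin n →₀ ℕ) : μ.degree = ∑ i, μ i := by
  rw [Finsupp.degree]
  exact Finset.sum_subset (Finset.subset_univ _)
    (fun x _ hx => Finsupp.notMem_support_iff.mp hx)

lemma degree_single (i : Fin n) (k : ℕ) : (Finsupp.single i k).degree = k := by
  rw [degree_eq_sum_univ]
  simp [Finsupp.single_apply]

lemma degree_add (μ ν : Fin n →₀ ℕ) : (μ + ν).degree = μ.degree + ν.degree := by
  simp only [degree_eq_sum_univ, Finsupp.add_apply, Finset.sum_add_distrib]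

lemma coeff_ne_zero_degree {φ : MvPolynomial (Fin n) ℂ} {k : ℕ} (hφ : φ.IsHomogeneous k)
    {d : Fin n →₀ ℕ} (hd : coeff d φ ≠ 0) : d.degree = k := by
  by_contra h
  exact hd (hφ.coeff_eq_zero h)

/-- monomial decomposition of the derivative -/
lemma pderiv_isHomogeneous {φ : MvPolynomial (Fin n) ℂ} {k : ℕ}
    (hφ : φ.IsHomogeneous (k + 1)) (i : Fin n) : (pderiv i φ).IsHomogeneous k := by
  conv_lhs => rw [φ.as_sum]
  rw [map_sum]
  apply MvPolynomial.IsHomogeneous.sum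
  intro μ hμ
  rw [pderiv_monomial]
  rcases Nat.eq_zero_or_pos (μ i) with h0 | h1
  · rw [h0]; simp only [Nat.cast_zero, mul_zero, map_zero]
    exact isHomogeneous_zero _ _ _
  · apply isHomogeneous_monomial
    have hle : Finsupp.single i 1 ≤ μ := by
      rw [Finsupp.single_le_iff]; exact h1
    have hsum : Finsupp.single i 1 + (μ - Finsupp.single i 1) = μ :=
      add_tsub_cancel_of_le hle
    have hdeg : μ.degree = k + 1 :=
      coeff_ne_zero_degree hφ (MvPolynomial.mem_support_iff.mp hμ)
    have := degree_add (Finsupp.single i 1) (μ - Finsupp.single i 1)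
    rw [hsum, hdeg, degree_single] at this
    omega

lemma euler {k : ℕ} {G : MvPolynomial (Fin n) ℂ} (hG : G.IsHomogeneous k) :
    ∑ i, X i * pderiv i G = (k : ℂ) • G := by
  have hmono : ∀ μ : Fin n →₀ ℕ, ∀ a : ℂ,
      ∑ i, X i * pderiv i (monomial μ a) = (μ.degree : ℂ) • monomial μ a := by
    intro μ a
    have hterm : ∀ i : Fin n,
        X i * pderiv i (monomial μ a) = ((μ i : ℂ)) • monomial μ a := by
      intro i
      rw [pderiv_monomial]
      rcases Nat.eq_zero_or_pos (μ i) with h0 | h1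
      · rw [h0]; simp
      · have hle : Finsupp.single i 1 ≤ μ := by
          rw [Finsupp.single_le_iff]; exact h1
        rw [X, monomial_mul, one_mul, add_tsub_cancel_of_le hle, smul_monomial,
          smul_eq_mul, mul_comm]
    rw [Finset.sum_congr rfl (fun i _ => hterm i), ← Finset.sum_smul]
    congr 1
    rw [degree_eq_sum_univ]
    push_cast
    ring
  conv_lhs => rw [G.as_sum]
  simp only [map_sum, Finset.mul_sum]
  rw [Finset.sum_comm]
  have : ∀ μ ∈ G.support,
      ∑ i, X i * pderiv i (monomial μ (coeff μ G)) = (k : ℂ) • monomial μ (coeff μ G) := by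
    intro μ hμ
    rw [hmono, coeff_ne_zero_degree hG (MvPolynomial.mem_support_iff.mp hμ)]
  rw [Finset.sum_congr rfl this, ← Finset.smul_sum, ← G.as_sum]


lemma degree_finset_sum {ι : Type*} (s : Finset ι) (f : ι → (Fin n →₀ ℕ)) :
    (∑ i ∈ s, f i).degree = ∑ i ∈ s, (f i).degree := by
  classical
  induction s using Finset.induction_on with
  | empty => simp
  | insert a s hx ih => rw [Finset.sum_insert hx, Finset.sum_insert hx, degree_add, ih]

lemma finite_degree_lt (B : ℕ) : Finite {μ : Fin n →₀ ℕ // μ.degree < B} := by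
  have h : {f : Fin n →₀ ℕ | f.degree < B} ⊆ {f | f.degree ≤ B} := by
    intro f hf; simp only [Set.mem_setOf_eq] at *; omega
  exact ((Finsupp.finite_of_degree_le B).subset h).to_subtype

lemma finite_degree_eq (B : ℕ) : Finite {μ : Fin n →₀ ℕ // μ.degree = B} := by
  have h : {f : Fin n →₀ ℕ | f.degree = B} ⊆ {f | f.degree ≤ B} := by
    intro f hf; simp only [Set.mem_setOf_eq] at *; omega
  exact ((Finsupp.finite_of_degree_le B).subset h).to_subtype

lemma homogeneousComponent_mul_homog {q : MvPolynomial (Fin n) ℂ} (g : MvPolynomial (Fin n) ℂ)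
    (hq : q.IsHomogeneous 2) {N : ℕ} (hN : 2 ≤ N) :
    homogeneousComponent N (g * q) = homogeneousComponent (N - 2) g * q := by
  conv_lhs => rw [← sum_homogeneousComponent g]
  rw [Finset.sum_mul, map_sum]
  have hterm : ∀ i, homogeneousComponent N (homogeneousComponent i g * q)
      = if i = N - 2 then homogeneousComponent i g * q else 0 := by
    intro i
    have hmem : homogeneousComponent i g * q ∈ homogeneousSubmodule (Fin n) ℂ (i + 2) :=
      (homogeneousComponent_isHomogeneous i g).mul hq
    rw [homogeneousComponent_of_mem hmem]
    exact if_congr (by omega) rfl rfl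
  rw [Finset.sum_congr rfl (fun i _ => hterm i), Finset.sum_ite_eq' _ (N - 2)]
  split_ifs with h
  · rfl
  · rw [Finset.mem_range, not_lt] at h
    rw [homogeneousComponent_eq_zero _ _ (by omega), zero_mul]

lemma graded_decomp {m : ℕ} (q : Fin m → MvPolynomial (Fin n) ℂ)
    (hq : ∀ j, (q j).IsHomogeneous 2) {x : MvPolynomial (Fin n) ℂ} {D : ℕ} (hD : 2 ≤ D)
    (hx : x.IsHomogeneous D) (hmem : x ∈ Ideal.span (Set.range q)) :
    ∃ h : Fin m → MvPolynomial (Fin n) ℂ, (∀ j, (h j).IsHomogeneous (D - 2)) ∧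
      ∑ j, h j * q j = x := by
  obtain ⟨g, hg⟩ := Ideal.mem_span_range_iff_exists_fun.mp hmem
  refine ⟨fun j => homogeneousComponent (D - 2) (g j),
    fun j => homogeneousComponent_isHomogeneous _ _, ?_⟩
  have key : ∑ j, homogeneousComponent (D - 2) (g j) * q j
      = homogeneousComponent D (∑ j, g j * q j) := by
    rw [map_sum]
    exact Finset.sum_congr rfl fun j _ => (homogeneousComponent_mul_homog (g j) (hq j) hD).symm
  rw [key, hg, homogeneousComponent_of_mem hx, if_pos rfl]

theorem exists_common_zero {m : ℕ} (hmn : m < n) (q : Fin m → MvPolynomial (Fin n) ℂ)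
    (hq : ∀ l, (q l).IsHomogeneous 2) :
    ∃ c : Fin n → ℂ, c ≠ 0 ∧ ∀ l, eval c (q l) = 0 := by
  classical
  have hn : 0 < n := lt_of_le_of_lt (Nat.zero_le m) hmn
  rcases Nat.eq_zero_or_pos m with rfl | hm
  · refine ⟨Pi.single ⟨0, hn⟩ 1, ?_, fun l => l.elim0⟩
    intro h0
    have := congrFun h0 ⟨0, hn⟩
    rw [Pi.single_eq_same] at this
    exact one_ne_zero this
  obtain ⟨m', rfl⟩ : ∃ m', m = m' + 1 := ⟨m - 1, by omega⟩
  obtain ⟨n', rfl⟩ : ∃ n', n = n' + 1 := ⟨n - 1, by omega⟩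
  have hn' : 1 ≤ n' := by omega
  have hm'n' : m' ≤ n' - 1 := by omega
  by_contra hcon
  push_neg at hcon
  set I : Ideal (MvPolynomial (Fin (n' + 1)) ℂ) := Ideal.span (Set.range q) with hI
  -- Nullstellensatz: each `X i` is in the radical of `I`.
  have hrad : ∀ i : Fin (n' + 1), (X i : MvPolynomial (Fin (n' + 1)) ℂ) ∈ I.radical := by
    intro i
    rw [← MvPolynomial.vanishingIdeal_zeroLocus_eq_radical (K := ℂ)]
    intro x hx
    have hx0 : x = 0 := by
      by_contra hxne
      obtain ⟨l, hl⟩ := hcon x hxne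
      exact hl (hx _ (Ideal.subset_span (Set.mem_range_self l)))
    rw [hx0, aeval_X]
    rfl
  choose e he using fun i => hrad i
  set N : ℕ := (Finset.univ.sup e) + 2 with hNdef
  have hN2 : 2 ≤ N := by omega
  have hXN : ∀ i : Fin (n' + 1), (X i : MvPolynomial (Fin (n' + 1)) ℂ) ^ N ∈ I := by
    intro i
    have hle : e i ≤ N := le_trans (Finset.le_sup (Finset.mem_univ i)) (by omega)
    have : (X i : MvPolynomial (Fin (n' + 1)) ℂ) ^ N
        = X i ^ e i * X i ^ (N - e i) := by rw [← pow_add, Nat.add_sub_cancel' hle]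
    rw [this]
    exact I.mul_mem_right _ (he i)
  choose h hh1 hh2 using fun i =>
    graded_decomp q hq hN2 (isHomogeneous_X_pow (R := ℂ) i N) (hXN i)
  set K : ℕ := (n' + 1) * (N - 1) + 1 with hKdef
  have hNK : N ≤ K := by
    have h1 : N - 1 ≤ (n' + 1) * (N - 1) := Nat.le_mul_of_pos_left _ hn
    omega
  set fam : (Fin (m' + 1) →₀ ℕ) × (Fin (n' + 1) →₀ ℕ) → MvPolynomial (Fin (n' + 1)) ℂ :=
    fun p => (p.1.prod fun j e => q j ^ e) * monomial p.2 1 with hfam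
  set A : ℕ → Set ((Fin (m' + 1) →₀ ℕ) × (Fin (n' + 1) →₀ ℕ)) :=
    fun k => {p | p.2.degree < K ∧ 2 * p.1.degree + p.2.degree = k} with hA
  -- the spanning claim
  have claim : ∀ k (μ : Fin (n' + 1) →₀ ℕ), μ.degree = k →
      monomial μ (1 : ℂ) ∈ Submodule.span ℂ (fam '' A k) := by
    intro k
    induction k using Nat.strong_induction_on with
    | _ k ih =>
    intro μ hμ
    by_cases hk : k < K
    · apply Submodule.subset_span
      refine ⟨(0, μ), ⟨by simpa [hA, hμ] using hk, by simp [hA, hμ]⟩, ?_⟩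
      simp [hfam, Finsupp.prod_zero_index]
    · push_neg at hk
      have hex : ∃ i, N ≤ μ i := by
        by_contra hno
        push_neg at hno
        have hle : μ.degree ≤ (n' + 1) * (N - 1) := by
          rw [degree_eq_sum_univ]
          calc ∑ i, μ i ≤ ∑ _i : Fin (n' + 1), (N - 1) :=
                Finset.sum_le_sum (fun i _ => by have := hno i; omega)
            _ = (n' + 1) * (N - 1) := by simp [Finset.sum_const, Finset.card_univ, mul_comm]
        omega
      obtain ⟨i, hi⟩ := hex
      set μ' := μ - Finsupp.single i N with hμ'
      have hsum : Finsupp.single i N + μ' = μ :=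
        add_tsub_cancel_of_le (Finsupp.single_le_iff.mpr hi)
      have hdegμ' : μ'.degree = k - N := by
        have hh := degree_add (Finsupp.single i N) μ'
        rw [hsum, hμ, degree_single] at hh
        omega
      have hkN : N ≤ k := le_trans hNK hk
      have hk2 : 2 ≤ k := by omega
      have key : monomial μ (1 : ℂ) = ∑ j, q j * (h i j * monomial μ' (1 : ℂ)) := by
        have h1 : monomial μ (1 : ℂ) = (X i ^ N) * monomial μ' 1 := by
          rw [X_pow_eq_monomial, monomial_mul, one_mul, hsum]
        rw [h1, ← hh2 i, Finset.sum_mul]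
        exact Finset.sum_congr rfl fun j _ => by ring
      rw [key]
      apply Submodule.sum_mem
      intro j _
      have hg : (h i j * monomial μ' (1 : ℂ)).IsHomogeneous (k - 2) := by
        have hmul := (hh1 i j).mul (isHomogeneous_monomial (1 : ℂ) hdegμ')
        have : N - 2 + (k - N) = k - 2 := by omega
        rwa [this] at hmul
      have hgspan : (h i j * monomial μ' (1 : ℂ)) ∈ Submodule.span ℂ (fam '' A (k - 2)) := by
        rw [show (h i j * monomial μ' (1 : ℂ))
          = ∑ ν ∈ (h i j * monomial μ' (1 : ℂ)).support,
              monomial ν (coeff ν (h i j * monomial μ' (1 : ℂ))) from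
          (h i j * monomial μ' (1 : ℂ)).as_sum]
        apply Submodule.sum_mem
        intro ν hν
        have hνdeg : ν.degree = k - 2 :=
          coeff_ne_zero_degree hg (MvPolynomial.mem_support_iff.mp hν)
        have hms := ih (k - 2) (by omega) ν hνdeg
        have hsmul : (monomial ν) (coeff ν (h i j * monomial μ' (1 : ℂ)))
            = coeff ν (h i j * monomial μ' (1 : ℂ)) • monomial ν (1 : ℂ) := by
          rw [smul_monomial, smul_eq_mul, mul_one]
        rw [hsmul]
        exact Submodule.smul_mem _ _ hms
      -- multiply by q j
      have hmulspan : ∀ y ∈ Submodule.span ℂ (fam '' A (k - 2)),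
          q j * y ∈ Submodule.span ℂ (fam '' A k) := by
        intro y hy
        induction hy using Submodule.span_induction with
        | mem x hx =>
          obtain ⟨p, hp, rfl⟩ := hx
          apply Submodule.subset_span
          refine ⟨(p.1 + Finsupp.single j 1, p.2), ⟨hp.1, ?_⟩, ?_⟩
          · have h2 := hp.2
            show 2 * (p.1 + Finsupp.single j 1).degree + p.2.degree = k
            rw [degree_add, degree_single]
            have h2' : 2 * p.1.degree + p.2.degree = k - 2 := h2
            omega
          · show fam _ = q j * fam p
            rw [hfam]
            simp only
            rw [Finsupp.prod_add_index' (fun a => pow_zero (q a))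
              (fun a b₁ b₂ => pow_add (q a) b₁ b₂), Finsupp.prod_single_index]
            · ring
            · exact pow_zero (q j)
        | zero => rw [mul_zero]; exact Submodule.zero_mem _
        | add x y _ _ hx hy => rw [mul_add]; exact Submodule.add_mem _ hx hy
        | smul a x _ hx => rw [mul_smul_comm]; exact Submodule.smul_mem _ _ hx
      exact hmulspan _ hgspan
  -- Counting contradiction
  haveI hfinlt : Finite {ν : Fin (n' + 1) →₀ ℕ // ν.degree < K} := finite_degree_lt K
  have hKpos : 0 < K := by omega
  haveI : Nonempty {ν : Fin (n' + 1) →₀ ℕ // ν.degree < K} :=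
    ⟨⟨0, by simpa [map_zero] using hKpos⟩⟩
  set M : ℕ := Nat.card {ν : Fin (n' + 1) →₀ ℕ // ν.degree < K} with hM
  have hM1 : 1 ≤ M := Nat.card_pos
  set s : ℕ := M * (n' + 1) ^ (n' - 1) with hs
  have hs1 : 1 ≤ s := by
    have hp : 0 < M * (n' + 1) ^ (n' - 1) :=
      Nat.mul_pos hM1 (Nat.pow_pos (by omega))
    omega
  set k : ℕ := n' * s with hkdef
  haveI hfineq : Finite {μ : Fin (n' + 1) →₀ ℕ // μ.degree = k} := finite_degree_eq k
  -- lower bound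
  have hlow : (s + 1) ^ n' ≤ Nat.card {μ : Fin (n' + 1) →₀ ℕ // μ.degree = k} := by
    have hsumle : ∀ a : Fin n' → Fin (s + 1), ∑ j, ((a j : ℕ)) ≤ k := by
      intro a
      calc ∑ j, ((a j : ℕ)) ≤ ∑ _j : Fin n', s :=
            Finset.sum_le_sum (fun j _ => Fin.is_le (a j))
        _ = n' * s := by simp [Finset.sum_const, Finset.card_univ, mul_comm]
    have happ : ∀ (a : Fin n' → Fin (s + 1)) (j0 : Fin n'),
        (∑ j, Finsupp.single (Fin.castSucc j) ((a j : ℕ))) (Fin.castSucc j0) = (a j0 : ℕ) := by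
      intro a j0
      rw [Finsupp.finset_sum_apply, Finset.sum_eq_single j0]
      · rw [Finsupp.single_eq_same]
      · intro b _ hb
        exact Finsupp.single_eq_of_ne' (by simpa [Fin.castSucc_inj] using hb)
      · intro hmem; exact absurd (Finset.mem_univ _) hmem
    set Φ : (Fin n' → Fin (s + 1)) → {μ : Fin (n' + 1) →₀ ℕ // μ.degree = k} :=
      fun a => ⟨(∑ j, Finsupp.single (Fin.castSucc j) ((a j : ℕ)))
          + Finsupp.single (Fin.last n') (k - ∑ j, ((a j : ℕ))), by
        rw [degree_add, degree_finset_sum]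
        simp only [degree_single]
        have := hsumle a
        omega⟩ with hΦ
    have hΦinj : Function.Injective Φ := by
      intro a b hab
      have hab' := congrArg Subtype.val hab
      funext j0
      have h1 := congrFun (congrArg (DFunLike.coe) hab') (Fin.castSucc j0)
      rw [Finsupp.add_apply, Finsupp.add_apply, happ, happ,
        Finsupp.single_eq_of_ne' (Fin.castSucc_lt_last j0).ne',
        Finsupp.single_eq_of_ne' (Fin.castSucc_lt_last j0).ne'] at h1
      exact Fin.ext (by omega)
    calc (s + 1) ^ n' = Nat.card (Fin n' → Fin (s + 1)) := by
          simp [Nat.card_eq_fintype_card]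
      _ ≤ _ := Nat.card_le_card_of_injective Φ hΦinj
  -- upper bound on the index set
  set T := ({ν : Fin (n' + 1) →₀ ℕ // ν.degree < K} × (Fin m' → Fin (k + 1))) with hT
  haveI : Finite T := by infer_instance
  set Ψ : ↥(A k) → T := fun pa =>
    (⟨pa.1.2, pa.2.1⟩, fun j => ⟨pa.1.1 (Fin.castSucc j), by
      have h1 := Finsupp.le_degree (Fin.castSucc j) pa.1.1
      have h2 := pa.2.2
      omega⟩) with hΨ
  have hβdeg : ∀ β : Fin (m' + 1) →₀ ℕ,
      β.degree = ∑ j : Fin m', β (Fin.castSucc j) + β (Fin.last m') := by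
    intro β
    rw [degree_eq_sum_univ, Fin.sum_univ_castSucc]
  have hΨinj : Function.Injective Ψ := by
    rintro ⟨pa, hpa⟩ ⟨pb, hpb⟩ hab
    have h2 : pa.2 = pb.2 := congrArg (Subtype.val ∘ Prod.fst) hab
    have hco : ∀ j : Fin m', pa.1 (Fin.castSucc j) = pb.1 (Fin.castSucc j) := by
      intro j
      have := congrFun (congrArg Prod.snd hab) j
      exact congrArg Fin.val this
    have hdeg : pa.1.degree = pb.1.degree := by
      have ha' := hpa.2
      have hb' := hpb.2
      rw [h2] at ha'
      omega
    have hlast : pa.1 (Fin.last m') = pb.1 (Fin.last m') := by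
      have h3 := hβdeg pa.1
      have h4 := hβdeg pb.1
      rw [Finset.sum_congr rfl (fun j _ => hco j)] at h3
      omega
    have h1 : pa.1 = pb.1 := by
      ext i
      induction i using Fin.lastCases with
      | last => exact hlast
      | cast j => exact hco j
    exact Subtype.ext (Prod.ext h1 h2)
  haveI hfinA : Finite ↥(A k) := Finite.of_injective Ψ hΨinj
  have hcard1 : Nat.card ↥(A k) ≤ M * (k + 1) ^ m' := by
    calc Nat.card ↥(A k) ≤ Nat.card T := Nat.card_le_card_of_injective Ψ hΨinj
      _ = M * (k + 1) ^ m' := by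
        rw [hT, Nat.card_prod]
        congr 1
        simp [Nat.card_eq_fintype_card]
  -- middle: monomials of degree k are independent in the span
  have hAfin : (A k).Finite := Set.toFinite _
  have himfin : (fam '' A k).Finite := hAfin.image _
  haveI := FiniteDimensional.span_of_finite ℂ himfin
  haveI : Fintype {μ : Fin (n' + 1) →₀ ℕ // μ.degree = k} := Fintype.ofFinite _
  haveI : Fintype ↥(fam '' A k) := himfin.fintype
  have hmid : Nat.card {μ : Fin (n' + 1) →₀ ℕ // μ.degree = k} ≤ Nat.card ↥(A k) := by
    have hli : LinearIndependent ℂ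
        (fun μ : {μ : Fin (n' + 1) →₀ ℕ // μ.degree = k} => (monomial μ.1 (1 : ℂ))) := by
      have hb := (basisMonomials (Fin (n' + 1)) ℂ).linearIndependent
      rw [coe_basisMonomials] at hb
      exact hb.comp Subtype.val Subtype.val_injective
    have hb2 : LinearIndependent ℂ
        (fun μ : {μ : Fin (n' + 1) →₀ ℕ // μ.degree = k} =>
          (⟨monomial μ.1 (1 : ℂ), claim k μ.1 μ.2⟩ : Submodule.span ℂ (fam '' A k))) :=
      LinearIndependent.of_comp (Submodule.span ℂ (fam '' A k)).subtype hli
    have hc1 : Fintype.card {μ : Fin (n' + 1) →₀ ℕ // μ.degree = k}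
        ≤ Module.finrank ℂ (Submodule.span ℂ (fam '' A k)) :=
      hb2.fintype_card_le_finrank
    have hc2 : Module.finrank ℂ (Submodule.span ℂ (fam '' A k))
        ≤ (fam '' A k).toFinset.card := finrank_span_le_card _
    have hc3 : (fam '' A k).toFinset.card = Nat.card ↥(fam '' A k) := by
      rw [Set.toFinset_card, Nat.card_eq_fintype_card]
    have hc4 : Nat.card ↥(fam '' A k) ≤ Nat.card ↥(A k) := by
      apply Nat.card_le_card_of_surjective
        (fun pa : ↥(A k) => (⟨fam pa.1, Set.mem_image_of_mem fam pa.2⟩ : ↥(fam '' A k)))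
      rintro ⟨y, p, hp, rfl⟩
      exact ⟨⟨p, hp⟩, rfl⟩
    rw [Nat.card_eq_fintype_card]
    omega
  -- final arithmetic contradiction
  have h3 : (k + 1) ^ m' ≤ (k + 1) ^ (n' - 1) := Nat.pow_le_pow_right (by omega) hm'n'
  have h4 : k + 1 ≤ (n' + 1) * (s + 1) := by
    have hr : (n' + 1) * (s + 1) = n' * s + n' + s + 1 := by ring
    omega
  have h5 : (k + 1) ^ (n' - 1) ≤ ((n' + 1) * (s + 1)) ^ (n' - 1) := Nat.pow_le_pow_left h4 _
  have h6 : ((n' + 1) * (s + 1)) ^ (n' - 1) = (n' + 1) ^ (n' - 1) * (s + 1) ^ (n' - 1) :=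
    mul_pow _ _ _
  have h7 : (s + 1) ^ n' = (s + 1) ^ (n' - 1) * (s + 1) := by
    rw [← pow_succ]
    congr 1
    omega
  have h8 : (s + 1) ^ n' ≤ s * (s + 1) ^ (n' - 1) := by
    calc (s + 1) ^ n' ≤ M * (k + 1) ^ m' := le_trans hlow (le_trans hmid hcard1)
      _ ≤ M * ((n' + 1) ^ (n' - 1) * (s + 1) ^ (n' - 1)) := by
          rw [← h6]
          exact Nat.mul_le_mul_left _ (le_trans h3 h5)
      _ = s * (s + 1) ^ (n' - 1) := by rw [hs]; ring
  rw [h7] at h8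
  have hpos : 0 < (s + 1) ^ (n' - 1) := Nat.pow_pos (by omega)
  rw [mul_comm s ((s + 1) ^ (n' - 1))] at h8
  have h9 : s + 1 ≤ s := Nat.le_of_mul_le_mul_left h8 hpos
  omega


/-- directional derivative -/
def Dc (c : Fin n → ℂ) (f : MvPolynomial (Fin n) ℂ) : MvPolynomial (Fin n) ℂ :=
  ∑ i, c i • pderiv i f

lemma Dc_zero (c : Fin n → ℂ) : Dc c 0 = 0 := by simp [Dc]

lemma Dc_isHomogeneous {c : Fin n → ℂ} {k : ℕ} {G : MvPolynomial (Fin n) ℂ}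
    (hG : G.IsHomogeneous (k + 1)) : (Dc c G).IsHomogeneous k := by
  apply MvPolynomial.IsHomogeneous.sum
  intro i _
  rw [smul_eq_C_mul]
  exact ((pderiv_isHomogeneous hG i).C_mul _)

lemma eval_Dc {c : Fin n → ℂ} {k : ℕ} {G : MvPolynomial (Fin n) ℂ}
    (hG : G.IsHomogeneous k) : eval c (Dc c G) = (k : ℂ) * eval c G := by
  have h := congrArg (eval c) (euler hG)
  simp only [map_sum, map_mul, eval_X, smul_eq_C_mul, eval_C] at h
  rw [Dc, map_sum]
  simp only [smul_eq_C_mul, map_mul, eval_C]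
  exact h

lemma eval_Dc_iterate (c : Fin n → ℂ) :
    ∀ (k : ℕ) (G : MvPolynomial (Fin n) ℂ), G.IsHomogeneous k →
      eval c ((Dc c)^[k] G) = (Nat.factorial k : ℂ) * eval c G := by
  intro k
  induction k with
  | zero => intro G _; simp
  | succ k ih =>
    intro G hG
    rw [Function.iterate_succ_apply, ih _ (Dc_isHomogeneous hG),
      eval_Dc hG, Nat.factorial_succ]
    push_cast
    ring

lemma pderiv_Dc (c : Fin n → ℂ) (j : Fin n) (f : MvPolynomial (Fin n) ℂ) :
    pderiv j (Dc c f) = Dc c (pderiv j f) := by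
  rw [Dc, map_sum, Dc]
  refine Finset.sum_congr rfl (fun i _ => ?_)
  rw [Derivation.map_smul]
  rw [pderiv_pderiv_comm n j i f]

lemma pderiv_Dc_iterate (c : Fin n → ℂ) (j : Fin n) (k : ℕ) (f : MvPolynomial (Fin n) ℂ) :
    pderiv j ((Dc c)^[k] f) = (Dc c)^[k] (pderiv j f) := by
  induction k generalizing f with
  | zero => rfl
  | succ k ih => rw [Function.iterate_succ_apply, Function.iterate_succ_apply, ih, pderiv_Dc]

/-- Key conclusion: if the second directional derivative of `F` along `c` vanishes and
`F` is homogeneous of degree `d ≥ 3`, then `c` is a singular point. -/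
lemma singular_of_Dc2 {c : Fin n → ℂ} {d : ℕ} (hd : 3 ≤ d) {F : MvPolynomial (Fin n) ℂ}
    (hF : F.IsHomogeneous d) (h2 : Dc c (Dc c F) = 0) :
    eval c F = 0 ∧ ∀ j, eval c (pderiv j F) = 0 := by
  have h2' : (Dc c)^[2] F = 0 := h2
  have hiter : ∀ k, (Dc c)^[k + 2] F = 0 := by
    intro k
    rw [Function.iterate_add_apply, h2']
    exact Function.iterate_fixed (Dc_zero c) k
  constructor
  · have hd' : d = (d - 2) + 2 := by omega
    have h0 : (Dc c)^[d] F = 0 := by rw [hd']; exact hiter _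
    have := eval_Dc_iterate c d F hF
    rw [h0, map_zero] at this
    have hne : (Nat.factorial d : ℂ) ≠ 0 := by
      exact_mod_cast Nat.cast_ne_zero.mpr (Nat.factorial_ne_zero d)
    exact (mul_eq_zero.mp this.symm).resolve_left hne
  · intro j
    have hFd : F.IsHomogeneous ((d - 1) + 1) := by rwa [Nat.sub_add_cancel (by omega)]
    have hpd : (pderiv j F).IsHomogeneous (d - 1) := pderiv_isHomogeneous hFd j
    have h0 : (Dc c)^[d - 1] (pderiv j F) = 0 := by
      rw [← pderiv_Dc_iterate]
      have hd' : d - 1 = (d - 3) + 2 := by omega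
      rw [hd', hiter, map_zero]
    have := eval_Dc_iterate c (d - 1) (pderiv j F) hpd
    rw [h0, map_zero] at this
    have hne : (Nat.factorial (d-1) : ℂ) ≠ 0 := by
      exact_mod_cast Nat.cast_ne_zero.mpr (Nat.factorial_ne_zero (d-1))
    exact (mul_eq_zero.mp this.symm).resolve_left hne


end ApolarAux

section MainAux
open ApolarAux

variable {n : ℕ}

/-- degree-2 classification -/
lemma deg2_classify (μ : Fin n →₀ ℕ) (h2 : μ.degree = 2) :
    ∃ i j : Fin n, μ = Finsupp.single i 1 + Finsupp.single j 1 := by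
  classical
  have hsum : ∑ i, μ i = 2 := by rw [← degree_eq_sum_univ, h2]
  have hex : ∃ i, μ i ≠ 0 := by
    by_contra hno
    push_neg at hno
    simp only [hno, Finset.sum_const_zero] at hsum
    omega
  obtain ⟨i, hi⟩ := hex
  have hile : μ i ≤ 2 := h2 ▸ Finsupp.le_degree i μ
  have hpair : ∀ j, j ≠ i → μ i + μ j ≤ 2 := by
    intro j hj
    have hsub : ({i, j} : Finset (Fin n)) ⊆ Finset.univ := Finset.subset_univ _
    have := Finset.sum_le_sum_of_subset hsub (f := fun l => μ l)
    rw [Finset.sum_pair (Ne.symm hj), hsum] at this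
    exact this
  rcases Nat.lt_or_ge (μ i) 2 with h1 | h1
  · -- μ i = 1
    have hμi : μ i = 1 := by omega
    have hex2 : ∃ j, j ≠ i ∧ μ j ≠ 0 := by
      by_contra hno
      push_neg at hno
      have : ∑ l, μ l = μ i := by
        rw [Finset.sum_eq_single i]
        · intro b _ hb
          exact hno b hb
        · intro h; exact absurd (Finset.mem_univ _) h
      omega
    obtain ⟨j, hji, hj⟩ := hex2
    have hμj : μ j = 1 := by have := hpair j hji; omega
    refine ⟨i, j, ?_⟩
    ext l
    rcases eq_or_ne l i with rfl | hli
    · simp [Finsupp.single_apply, hji, Ne.symm hji, hμi]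
    · rcases eq_or_ne l j with rfl | hlj
      · simp [Finsupp.single_apply, hli, Ne.symm hli, hμj]
      · have htrip : μ i + μ j + μ l ≤ 2 := by
          have hsub : ({i, j, l} : Finset (Fin n)) ⊆ Finset.univ := Finset.subset_univ _
          have hs := Finset.sum_le_sum_of_subset hsub (f := fun t => μ t)
          rw [hsum] at hs
          have hmem : i ∉ ({j, l} : Finset (Fin n)) := by
            simp [Ne.symm hji, Ne.symm hli]
          rw [Finset.sum_insert hmem, Finset.sum_pair (Ne.symm hlj)] at hs
          omega
        have : μ l = 0 := by omega
        simp [Finsupp.single_apply, Ne.symm hli, Ne.symm hlj, this]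
  · -- μ i = 2
    have hμi : μ i = 2 := by omega
    refine ⟨i, i, ?_⟩
    ext l
    rcases eq_or_ne l i with rfl | hli
    · simp [Finsupp.single_apply, hμi]
    · have := hpair l hli
      have : μ l = 0 := by omega
      simp [Finsupp.single_apply, Ne.symm hli, this]

lemma card_deg2_le : Nat.card {μ : Fin n →₀ ℕ // μ.degree = 2} ≤ n * (n + 1) / 2 := by
  classical
  haveI := (finite_degree_eq (n := n) 2)
  have hdegsj : ∀ i j : Fin n, (Finsupp.single i 1 + Finsupp.single j 1).degree = 2 := by
    intro i j
    rw [degree_add, degree_single, degree_single]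
  set g : Sym2 (Fin n) → {μ : Fin n →₀ ℕ // μ.degree = 2} :=
    Sym2.lift ⟨fun i j => ⟨Finsupp.single i 1 + Finsupp.single j 1, hdegsj i j⟩,
      fun i j => Subtype.ext (add_comm _ _)⟩ with hg
  have hsurj : Function.Surjective g := by
    rintro ⟨μ, hμ⟩
    obtain ⟨i, j, rfl⟩ := deg2_classify μ hμ
    exact ⟨s(i, j), rfl⟩
  calc Nat.card {μ : Fin n →₀ ℕ // μ.degree = 2} ≤ Nat.card (Sym2 (Fin n)) :=
        Nat.card_le_card_of_surjective g hsurj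
    _ = n * (n + 1) / 2 := by
        rw [Nat.card_eq_fintype_card, Sym2.card, Fintype.card_fin, Nat.choose_two_right,
          Nat.add_sub_cancel, mul_comm]

lemma half_square_id : n * (n + 1) / 2 = n * (n - 1) / 2 + n := by
  rcases n with _ | n0
  · simp
  · have h1 : (n0 + 1) * (n0 + 1 + 1) = (n0 + 1) * (n0 + 1 - 1) + 2 * (n0 + 1) := by
      simp only [Nat.add_sub_cancel]
      ring
    rw [h1, Nat.add_mul_div_left _ _ (by norm_num : (0:ℕ) < 2)]

end MainAux

set_option maxHeartbeats 1000000 in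
set_option synthInstance.maxHeartbeats 400000 in
open ApolarAux in
/-- If `F` of degree `d ≥ 3` defines a smooth hypersurface in `ℙ^{n-1}`
(no common nonzero zero of `F` and its first partials), then `dim_ℂ (F^⊥)₂ ≤ n(n-1)/2`. -/
theorem smooth_hypersurface_quadric_bound
    (n d : ℕ) (hd : 3 ≤ d) (F : MvPolynomial (Fin n) ℂ) (hF : F.IsHomogeneous d)
    (hsmooth : ∀ a : Fin n → ℂ, a ≠ 0 →
      ¬ (MvPolynomial.eval a F = 0 ∧ ∀ i, MvPolynomial.eval a (pderiv i F) = 0)) :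
    Module.finrank ℂ
      ↥((apolarIdeal F).restrictScalars ℂ ⊓ homogeneousSubmodule (Fin n) ℂ 2)
      ≤ n * (n - 1) / 2 := by
  classical
  by_contra hbig
  push_neg at hbig
  set T2 := homogeneousSubmodule (Fin n) ℂ 2 with hT2
  set K := (apolarIdeal F).restrictScalars ℂ ⊓ T2 with hK
  -- the contraction-by-F linear map
  set Ψ : MvPolynomial (Fin n) ℂ →ₗ[ℂ] MvPolynomial (Fin n) ℂ :=
    { toFun := fun Θ => contract Θ F
      map_add' := by
        intro a b
        simp only [contract, map_add, LinearMap.add_apply]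
      map_smul' := by
        intro c a
        simp only [contract, map_smul, LinearMap.smul_apply, RingHom.id_apply] } with hΨ
  set Ψ' : T2 →ₗ[ℂ] MvPolynomial (Fin n) ℂ := Ψ.comp T2.subtype with hΨ'
  -- T2 is finite dimensional with dimension at most n(n+1)/2
  haveI hfin2 : Finite {μ : Fin n →₀ ℕ // μ.degree = 2} := finite_degree_eq 2
  set mon2 : {μ : Fin n →₀ ℕ // μ.degree = 2} → MvPolynomial (Fin n) ℂ :=
    fun μ => MvPolynomial.monomial μ.1 (1 : ℂ) with hmon2
  have hT2span : T2 ≤ Submodule.span ℂ (Set.range mon2) := by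
    intro f hf
    rw [f.as_sum]
    apply Submodule.sum_mem
    intro μ hμ
    have hdeg : μ.degree = 2 :=
      coeff_ne_zero_degree hf (MvPolynomial.mem_support_iff.mp hμ)
    have : (MvPolynomial.monomial μ) (MvPolynomial.coeff μ f)
        = MvPolynomial.coeff μ f • mon2 ⟨μ, hdeg⟩ := by
      rw [hmon2]
      simp only
      rw [MvPolynomial.smul_monomial, smul_eq_mul, mul_one]
    rw [this]
    exact Submodule.smul_mem _ _ (Submodule.subset_span (Set.mem_range_self _))
  haveI hfdspan : FiniteDimensional ℂ (Submodule.span ℂ (Set.range mon2)) :=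
    FiniteDimensional.span_of_finite ℂ (Set.finite_range mon2)
  haveI hfdT2 : FiniteDimensional ℂ T2 := Submodule.finiteDimensional_of_le hT2span
  have hrankT2 : Module.finrank ℂ T2 ≤ n * (n + 1) / 2 := by
    haveI : Fintype ↥(Set.range mon2) := (Set.finite_range mon2).fintype
    have h1 : Module.finrank ℂ T2 ≤ Module.finrank ℂ (Submodule.span ℂ (Set.range mon2)) :=
      Submodule.finrank_mono hT2span
    have h2 : Module.finrank ℂ (Submodule.span ℂ (Set.range mon2))
        ≤ (Set.range mon2).toFinset.card := finrank_span_le_card _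
    have h3 : (Set.range mon2).toFinset.card = Nat.card ↥(Set.range mon2) := by
      rw [Set.toFinset_card, Nat.card_eq_fintype_card]
    have h4 : Nat.card ↥(Set.range mon2) ≤ Nat.card {μ : Fin n →₀ ℕ // μ.degree = 2} := by
      apply Nat.card_le_card_of_surjective
        (fun μ : {μ : Fin n →₀ ℕ // μ.degree = 2} =>
          (⟨mon2 μ, Set.mem_range_self μ⟩ : ↥(Set.range mon2)))
      rintro ⟨y, μ, rfl⟩
      exact ⟨μ, rfl⟩
    have h5 := card_deg2_le (n := n)
    omega
  -- kernel of Ψ' has the same dimension as K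
  have hKle : K ≤ T2 := inf_le_right
  have hkerK : Module.finrank ℂ (LinearMap.ker Ψ') = Module.finrank ℂ K := by
    have heq : LinearMap.ker Ψ' = Submodule.comap T2.subtype K := by
      ext x
      simp only [LinearMap.mem_ker, hΨ', LinearMap.comp_apply, Submodule.coe_subtype,
        Submodule.mem_comap, hK, Submodule.mem_inf, Submodule.restrictScalars_mem]
      constructor
      · intro hx
        exact ⟨hx, x.2⟩
      · intro hx
        exact hx.1
    rw [heq]
    exact (Submodule.comapSubtypeEquivOfLe hKle).finrank_eq
  -- the span of second partials
  set W := Submodule.span ℂ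
    (Set.range fun p : Fin n × Fin n => pderiv p.1 (pderiv p.2 F)) with hW
  haveI hfdW : FiniteDimensional ℂ W :=
    FiniteDimensional.span_of_finite ℂ (Set.finite_range _)
  have hcontractXX : ∀ p : Fin n × Fin n,
      contract (X p.1 * X p.2) F = pderiv p.1 (pderiv p.2 F) := by
    intro p
    rw [contract, map_mul]
    show apolarAlgHom n (X p.1) ((apolarAlgHom n (X p.2)) F) = _
    rw [apolarAlgHom_X, apolarAlgHom_X]
    rfl
  have hXXmem : ∀ p : Fin n × Fin n, (X p.1 * X p.2 : MvPolynomial (Fin n) ℂ) ∈ T2 :=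
    fun p => (isHomogeneous_X ℂ p.1).mul (isHomogeneous_X ℂ p.2)
  have hWle : W ≤ LinearMap.range Ψ' := by
    rw [hW, Submodule.span_le]
    rintro _ ⟨p, rfl⟩
    exact ⟨⟨X p.1 * X p.2, hXXmem p⟩, hcontractXX p⟩
  haveI hfr : Module.Finite ℂ (LinearMap.range Ψ') := Module.Finite.range Ψ'
  have hWrank : Module.finrank ℂ W ≤ Module.finrank ℂ (LinearMap.range Ψ') := by
    calc Module.finrank ℂ W
        = Module.finrank ℂ (Submodule.comap (LinearMap.range Ψ').subtype W) :=
          (Submodule.comapSubtypeEquivOfLe hWle).finrank_eq.symm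
      _ ≤ Module.finrank ℂ (LinearMap.range Ψ') :=
          Submodule.finrank_le _
  -- dimension count gives `finrank W < n`
  have hrn := LinearMap.finrank_range_add_finrank_ker Ψ'
  have hid := half_square_id (n := n)
  have hmn : Module.finrank ℂ W < n := by
    have hb : n * (n - 1) / 2 < Module.finrank ℂ K := hbig
    omega
  -- build the quadrics recording membership of the catalecticant image in W
  set bW := Module.finBasis ℂ W with hbW
  set DD : Fin n × Fin n → W := fun p =>
    ⟨pderiv p.1 (pderiv p.2 F), Submodule.subset_span (Set.mem_range_self p)⟩ with hDD
  set qq : Fin (Module.finrank ℂ W) → MvPolynomial (Fin n) ℂ :=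
    fun l => ∑ p : Fin n × Fin n, (bW.coord l (DD p)) • (X p.1 * X p.2) with hqq
  have hqqhom : ∀ l, (qq l).IsHomogeneous 2 := by
    intro l
    apply MvPolynomial.IsHomogeneous.sum
    intro p _
    rw [MvPolynomial.smul_eq_C_mul]
    exact MvPolynomial.IsHomogeneous.C_mul (hXXmem p) _
  obtain ⟨c, hc0, hcz⟩ := exists_common_zero hmn qq hqqhom
  -- the common zero kills the full quadratic combination of second partials
  have hwc : ∑ p : Fin n × Fin n, (c p.1 * c p.2) • DD p = (0 : W) := by
    rw [← bW.forall_coord_eq_zero_iff]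
    intro l
    have hval := hcz l
    rw [hqq] at hval
    simp only [map_sum, MvPolynomial.smul_eq_C_mul, MvPolynomial.eval_mul,
      MvPolynomial.eval_C, MvPolynomial.eval_X] at hval
    rw [map_sum]
    rw [← hval]
    apply Finset.sum_congr rfl
    intro p _
    rw [map_smul, smul_eq_mul]
    ring
  have hsum0 : ∑ p : Fin n × Fin n, (c p.1 * c p.2) • pderiv p.1 (pderiv p.2 F) = 0 := by
    have := congrArg (Subtype.val) hwc
    rw [Submodule.coe_sum] at this
    simpa using this
  -- conclude via the calculus lemma
  have hDc2 : Dc c (Dc c F) = 0 := by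
    rw [Dc, Dc]
    have hexp : ∀ i : Fin n, c i • pderiv i (∑ j, c j • pderiv j F)
        = ∑ j, (c i * c j) • pderiv i (pderiv j F) := by
      intro i
      rw [map_sum, Finset.smul_sum]
      apply Finset.sum_congr rfl
      intro j _
      rw [Derivation.map_smul, smul_smul]
    rw [Finset.sum_congr rfl (fun i _ => hexp i)]
    rw [← Finset.sum_product']
    rw [← hsum0]
    rfl
  obtain ⟨hz, hpz⟩ := singular_of_Dc2 hd hF hDc2
  exact hsmooth c hc0 ⟨hz, hpz⟩

end AuxProof
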